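/- Let G be a simple graph on a vertex type V, let v be a vertex, and let a and b be vertices with a ≠ v and b ≠ v. Suppose there exists a walk from a to b in G that avoids v (i.e., none of its vertices equals v). Then for every path p from a to b in G and every vertex x on p with x ≠ v, there exists a walk from a to x in G that avoids v. In other words, every path between two vertices lying in the same connected component of G − v stays inside that component together with possibly the vertex v itself. -/

import Mathlib

/-- Let `a ≠ v`, `b ≠ v` and suppose some walk from `a` to `b`
avoids the vertex `v`.  Then for every path `p` from `a` to `b` and every
vertex `x` on `p` with `x ≠ v`, there is a walk from `a` to `x` avoiding `v`;
i.e. any path between two vertices of the same component of `G − v` stays in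
that component (together with possibly `v` itself). -/
theorem path_stays_in_component_of_minus_v {V : Type*} (G : SimpleGraph V)
    (v a b : V) (ha : a ≠ v) (hb : b ≠ v)
    (hwalk : ∃ w : G.Walk a b, v ∉ w.support)
    (p : G.Walk a b) (hp : p.IsPath)
    (x : V) (hx : x ∈ p.support) (hxv : x ≠ v) :
    ∃ w : G.Walk a x, v ∉ w.support := by
  classical
  obtain ⟨w, hw⟩ := hwalk
  by_cases hvt : v ∈ (p.takeUntil x hx).support
  · -- v lies on the first part; use w then go back along the second part
    have hnd := hp.support_nodup
    have hsplit := SimpleGraph.Walk.take_spec p hx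
    have hsup : p.support = (p.takeUntil x hx).support ++ (p.dropUntil x hx).support.tail := by
      rw [← SimpleGraph.Walk.support_append, hsplit]
    have hvdt : v ∉ (p.dropUntil x hx).support.tail := by
      intro hvd
      have : ¬ p.support.Nodup := by
        rw [hsup]
        simp only [List.nodup_append]
        intro h
        exact h.2.2 v hvt v hvd rfl
      exact this hnd
    have hvd : v ∉ (p.dropUntil x hx).support := by
      rw [SimpleGraph.Walk.support_eq_cons]
      simp only [List.mem_cons, not_or]
      exact ⟨fun h => hxv h.symm, hvdt⟩
    refine ⟨w.append (p.dropUntil x hx).reverse, ?_⟩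
    rw [SimpleGraph.Walk.mem_support_append_iff]
    simp only [SimpleGraph.Walk.support_reverse, List.mem_reverse]
    exact fun h => h.elim hw hvd
  · exact ⟨p.takeUntil x hx, hvt⟩
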